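/- Combining the bounds: if m = 2a log₂ n and 2288/(a n^{a-1} log₂ n) < 1, then F^(2)(ALT with ℓ=3) < (1 + 1/2^n)(1 + 1.2/n^{2a})²(1 + 2288/(a n^{a-1} log₂ n)) · F^(2)_Haar, where F^(2)_Haar = 1/(2^{n-1}(2^n+1)). In particular, for fixed a > 1, F^(2)(ALT)/F^(2)_Haar → 1 as n → ∞. -/

import Mathlib

open Filter
section AltAux
open Real

lemma pow_logb_eq (c : ℝ) (x : ℝ) (hx : 0 < x) :
    (2 : ℝ) ^ (c * Real.logb 2 x) = x ^ c := by
  rw [mul_comm, Real.rpow_mul (by norm_num : (0:ℝ) ≤ 2),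
    Real.rpow_logb (by norm_num) (by norm_num) hx]

lemma key_bound (a : ℝ) (ha : 1 < a) (n : ℕ) (hn : 2 ≤ n)
    (hsmall : 2288 / (a * (n : ℝ) ^ (a - 1) * Real.logb 2 n) < 1) :
    32 * ((1 + 83.2 / (2 : ℝ) ^ (a * Real.logb 2 n))
        ^ ((n : ℝ) / (2 * a * Real.logb 2 n) - 1) - 1)
      ≤ 2288 / (a * (n : ℝ) ^ (a - 1) * Real.logb 2 n) := by
  have hN : (2 : ℝ) ≤ (n : ℝ) := by exact_mod_cast hn
  have hNpos : (0 : ℝ) < n := by linarith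
  have hL : (1 : ℝ) ≤ Real.logb 2 n := by
    rw [show (1:ℝ) = Real.logb 2 2 by simp]
    exact Real.logb_le_logb_of_le (by norm_num) (by norm_num) hN
  have ha0 : (0 : ℝ) < a := by linarith
  have hNa1 : (0 : ℝ) < (n : ℝ) ^ (a - 1) := Real.rpow_pos_of_pos hNpos _
  set D : ℝ := a * (n : ℝ) ^ (a - 1) * Real.logb 2 n with hD
  have hDpos : 0 < D := by positivity
  have hD2288 : 2288 < D := by
    rw [div_lt_one hDpos] at hsmall; exact hsmall
  rw [pow_logb_eq a n hNpos]
  have hNa : (0 : ℝ) < (n : ℝ) ^ a := Real.rpow_pos_of_pos hNpos _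
  set x : ℝ := 83.2 / (n : ℝ) ^ a with hx
  have hxpos : 0 < x := by positivity
  set t : ℝ := (n : ℝ) / (2 * a * Real.logb 2 n) - 1 with ht
  rcases le_or_gt t 0 with htle | htpos
  · have h1 : (1 + x) ^ t ≤ 1 :=
      Real.rpow_le_one_of_one_le_of_nonpos (by linarith) htle
    have : 0 ≤ 2288 / D := by positivity
    linarith
  · have h1 : (1 + x) ^ t ≤ Real.exp (x * t) := by
      rw [Real.rpow_def_of_pos (by linarith)]
      apply Real.exp_le_exp.2
      have hlog : Real.log (1 + x) ≤ x := by
        have := Real.log_le_sub_one_of_pos (show (0:ℝ) < 1 + x by linarith)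
        linarith
      nlinarith
    set u : ℝ := x * t with hu
    have hupos : 0 < u := mul_pos hxpos htpos
    have hut : u ≤ 41.6 / D := by
      have htle2 : t ≤ (n : ℝ) / (2 * a * Real.logb 2 n) := by
        simp only [ht]; linarith
      have hNsplit : (n : ℝ) ^ a = (n : ℝ) ^ (a - 1) * (n : ℝ) := by
        rw [← Real.rpow_add_one (ne_of_gt hNpos)]; ring_nf
      have h2 : x * t ≤ (83.2 / (n:ℝ)^a) * ((n : ℝ) / (2 * a * Real.logb 2 n)) :=
        mul_le_mul_of_nonneg_left htle2 (le_of_lt hxpos)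
      have heq : (83.2 / (n:ℝ)^a) * ((n : ℝ) / (2 * a * Real.logb 2 n)) = 41.6 / D := by
        rw [hNsplit, hD]
        field_simp
        ring
      rw [heq] at h2
      exact h2
    have hu50 : u ≤ 1 / 50 := by
      have : 41.6 / D ≤ 41.6 / 2288 :=
        div_le_div_of_nonneg_left (by norm_num) (by norm_num) (le_of_lt hD2288)
      calc u ≤ 41.6 / D := hut
        _ ≤ 41.6 / 2288 := this
        _ ≤ 1 / 50 := by norm_num
    have hE := Real.add_one_le_exp (-u)
    have hEpos := Real.exp_pos u
    have hEmul : (1 - u) * Real.exp u ≤ 1 := by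
      rw [Real.exp_neg] at hE
      have := mul_le_mul_of_nonneg_right hE (le_of_lt hEpos)
      rw [inv_mul_cancel₀ (ne_of_gt hEpos)] at this
      linarith
    have hEle : Real.exp u ≤ 50 / 49 := by nlinarith
    have hexp : Real.exp u - 1 ≤ (50 / 49) * u := by nlinarith
    have h41 : (50/49 : ℝ) * u ≤ (50/49) * (41.6 / D) := by nlinarith
    calc 32 * ((1 + x) ^ t - 1) ≤ 32 * (Real.exp u - 1) := by linarith
      _ ≤ 32 * ((50/49) * (41.6/D)) := by linarith
      _ = (66560 / 49) / D := by field_simp; ring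
      _ ≤ 2288 / D := by
          rw [div_le_div_iff_of_pos_right hDpos]
          norm_num

end AltAux
open Real

/-- Combining the bounds for the 3-layer alternating layered ansatz: assume (Theorem 4
of the paper) that for all `n ≥ 2`, with `m = 2a log₂ n`,
`F⁽²⁾(ALT) < (1 + 1/2^n)(1 + 1.2/2^m)²(1 + 32((1 + 83.2/2^(m/2))^(n/m-1) - 1))·F⁽²⁾_Haar`,
where `F⁽²⁾_Haar(n) = 1/(2^(n-1)(2^n+1))`, and `F⁽²⁾(ALT) ≥ F⁽²⁾_Haar`.  Then whenever
`2288/(a n^(a-1) log₂ n) < 1`,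
`F⁽²⁾(ALT) < (1 + 1/2^n)(1 + 1.2/n^(2a))²(1 + 2288/(a n^(a-1) log₂ n))·F⁽²⁾_Haar`;
in particular, for fixed `a > 1`, `F⁽²⁾(ALT)/F⁽²⁾_Haar → 1` as `n → ∞`. -/
theorem alt_expressibility_asymptotic (a : ℝ) (ha : 1 < a)
    (F2 FHaar : ℕ → ℝ)
    (hFHaar : ∀ n : ℕ, FHaar n = 1 / ((2 : ℝ) ^ (n - 1) * ((2 : ℝ) ^ n + 1)))
    (hup : ∀ n : ℕ, 2 ≤ n →
      F2 n < (1 + 1 / (2 : ℝ) ^ n)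
          * (1 + 1.2 / (2 : ℝ) ^ (2 * a * Real.logb 2 n)) ^ 2
          * (1 + 32 * ((1 + 83.2 / (2 : ℝ) ^ (a * Real.logb 2 n))
                ^ ((n : ℝ) / (2 * a * Real.logb 2 n) - 1) - 1))
          * FHaar n)
    (hlow : ∀ n : ℕ, 2 ≤ n → FHaar n ≤ F2 n) :
    (∀ n : ℕ, 2 ≤ n → 2288 / (a * (n : ℝ) ^ (a - 1) * Real.logb 2 n) < 1 →
      F2 n < (1 + 1 / (2 : ℝ) ^ n) * (1 + 1.2 / (n : ℝ) ^ (2 * a)) ^ 2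
          * (1 + 2288 / (a * (n : ℝ) ^ (a - 1) * Real.logb 2 n)) * FHaar n) ∧
    Tendsto (fun n : ℕ => F2 n / FHaar n) atTop (nhds 1) := by
  --
  have hFpos : ∀ n : ℕ, 0 < FHaar n := by
    intro n; rw [hFHaar n]; positivity
  have part1 : ∀ n : ℕ, 2 ≤ n → 2288 / (a * (n : ℝ) ^ (a - 1) * Real.logb 2 n) < 1 →
      F2 n < (1 + 1 / (2 : ℝ) ^ n) * (1 + 1.2 / (n : ℝ) ^ (2 * a)) ^ 2
          * (1 + 2288 / (a * (n : ℝ) ^ (a - 1) * Real.logb 2 n)) * FHaar n := by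
    intro n hn hsmall
    have hNpos : (0 : ℝ) < n := by
      have : (2:ℝ) ≤ n := by exact_mod_cast hn
      linarith
    have h := hup n hn
    rw [pow_logb_eq (2*a) n hNpos] at h
    refine h.trans_le ?_
    have hkey := key_bound a ha n hn hsmall
    gcongr
    exact (hFpos n).le
  refine ⟨part1, ?_⟩
  have hD : Tendsto (fun n : ℕ => a * (n:ℝ)^(a-1) * Real.logb 2 n) atTop atTop := by
    have h1 : Tendsto (fun n : ℕ => (n:ℝ)^(a-1)) atTop atTop :=
      (tendsto_rpow_atTop (by linarith)).comp tendsto_natCast_atTop_atTop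
    have h2 : Tendsto (fun n : ℕ => Real.logb 2 (n:ℝ)) atTop atTop :=
      (Real.tendsto_logb_atTop (by norm_num : (1:ℝ) < 2)).comp tendsto_natCast_atTop_atTop
    have h3 := h1.atTop_mul_atTop₀ h2
    have h4 := h3.const_mul_atTop (show 0 < a by linarith)
    simpa [mul_assoc] using h4
  have hf3 : Tendsto (fun n : ℕ => 2288 / (a * (n:ℝ)^(a-1) * Real.logb 2 n)) atTop (nhds 0) :=
    tendsto_const_nhds.div_atTop hD
  have hf1 : Tendsto (fun n : ℕ => 1 / (2:ℝ)^n) atTop (nhds 0) := by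
    have := tendsto_pow_atTop_nhds_zero_of_lt_one
      (show (0:ℝ) ≤ 1/2 by norm_num) (show (1:ℝ)/2 < 1 by norm_num)
    simpa [one_div, inv_pow] using this
  have hf2 : Tendsto (fun n : ℕ => (1.2 : ℝ) / (n:ℝ)^(2*a)) atTop (nhds 0) := by
    refine tendsto_const_nhds.div_atTop ?_
    exact (tendsto_rpow_atTop (by linarith : (0:ℝ) < 2*a)).comp tendsto_natCast_atTop_atTop
  have hh : Tendsto (fun n : ℕ => (1 + 1/(2:ℝ)^n) * (1 + 1.2/(n:ℝ)^(2*a))^2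
      * (1 + 2288 / (a * (n:ℝ)^(a-1) * Real.logb 2 n))) atTop (nhds 1) := by
    have c1 : Tendsto (fun _ : ℕ => (1:ℝ)) atTop (nhds 1) := tendsto_const_nhds
    have := ((c1.add hf1).mul ((c1.add hf2).pow 2)).mul (c1.add hf3)
    norm_num at this
    convert this using 3 with n
    norm_num
  have hevs : ∀ᶠ n : ℕ in atTop,
      2288 / (a * (n:ℝ)^(a-1) * Real.logb 2 n) < 1 :=
    hf3.eventually_lt_const one_pos
  have hlower : ∀ᶠ n : ℕ in atTop, (1:ℝ) ≤ F2 n / FHaar n := by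
    filter_upwards [eventually_ge_atTop 2] with n hn
    rw [le_div_iff₀ (hFpos n)]
    simpa using hlow n hn
  have hupper : ∀ᶠ n : ℕ in atTop, F2 n / FHaar n ≤ (1 + 1/(2:ℝ)^n)
      * (1 + 1.2/(n:ℝ)^(2*a))^2 * (1 + 2288 / (a * (n:ℝ)^(a-1) * Real.logb 2 n)) := by
    filter_upwards [eventually_ge_atTop 2, hevs] with n hn hs
    rw [div_le_iff₀ (hFpos n)]
    exact (part1 n hn hs).le
  exact tendsto_of_tendsto_of_tendsto_of_le_of_le' tendsto_const_nhds hh hlower hupper
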